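/- For integers M, N ≥ 4 with 1/M + 1/N < 1/2, let q_k and p_k be given by the closed-form expressions q_k = (M/√(b²−4))[(b+1)(α₁^{2k−2}−α₂^{2k−2}) − (α₁^{2k−4}−α₂^{2k−4})] and p_k = q_k/M + ((M−2)/((b−2)√(b+2)))[(b−1)(α₁^{2k−3}−α₂^{2k−3}) − (α₁^{2k−5}−α₂^{2k−5})]. Then lim_{k→∞} p_k/q_k = 1/M + ((M−2)/(M√(b−2)·α₁))·((b−1)α₁² − 1)/((b+1)α₁² − 1). -/

import Mathlib

set_option maxHeartbeats 1600000 in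
theorem stmt_15 (M N : ℕ) (hM : 4 ≤ M) (hN : 4 ≤ N)
    (hMN : (1 : ℝ) / M + 1 / N < 1 / 2)
    (b : ℝ) (hb : b = ((M : ℝ) - 2) * ((N : ℝ) - 2) - 2)
    (a1 a2 : ℝ)
    (h1 : a1 = (Real.sqrt (b - 2) + Real.sqrt (b + 2)) / 2)
    (h2 : a2 = -1 / a1)
    (q p : ℕ → ℝ)
    (hq : ∀ k : ℕ, q k = ((M : ℝ) / Real.sqrt (b ^ 2 - 4)) *
        ((b + 1) * (a1 ^ (2 * k - 2) - a2 ^ (2 * k - 2))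
          - (a1 ^ (2 * k - 4) - a2 ^ (2 * k - 4))))
    (hp : ∀ k : ℕ, p k = q k / M + (((M : ℝ) - 2) / ((b - 2) * Real.sqrt (b + 2))) *
        ((b - 1) * (a1 ^ (2 * k - 3) - a2 ^ (2 * k - 3))
          - (a1 ^ (2 * k - 5) - a2 ^ (2 * k - 5)))) :
    Filter.Tendsto (fun k : ℕ => p k / q k) Filter.atTop
      (nhds (1 / (M : ℝ) + (((M : ℝ) - 2) / ((M : ℝ) * Real.sqrt (b - 2) * a1)) *
        (((b - 1) * a1 ^ 2 - 1) / ((b + 1) * a1 ^ 2 - 1)))) := by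
  have hm : (4:ℝ) ≤ M := by exact_mod_cast hM
  have hn : (4:ℝ) ≤ N := by exact_mod_cast hN
  have hMpos : (0:ℝ) < M := by linarith
  have hNpos : (0:ℝ) < N := by linarith
  have hb2 : 2 < b := by
    rw [div_add_div _ _ (ne_of_gt hMpos) (ne_of_gt hNpos),
      div_lt_div_iff₀ (by positivity) (by norm_num)] at hMN
    rw [hb]; nlinarith
  have hbm2 : (0:ℝ) < b - 2 := by linarith
  have hbp2 : (0:ℝ) < b + 2 := by linarith
  set s1 := Real.sqrt (b-2) with hs1def
  set s2 := Real.sqrt (b+2) with hs2def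
  have hs1 : 0 < s1 := Real.sqrt_pos.2 hbm2
  have hs1sq : s1^2 = b - 2 := Real.sq_sqrt hbm2.le
  have hs2sq : s2^2 = b + 2 := Real.sq_sqrt hbp2.le
  have hs2 : 2 < s2 := by nlinarith [Real.sqrt_nonneg (b+2)]
  have hsb : Real.sqrt (b^2 - 4) = s1 * s2 := by
    rw [show b^2 - 4 = (b-2)*(b+2) by ring, Real.sqrt_mul hbm2.le]
  have ha1 : 1 < a1 := by rw [h1]; nlinarith [hs1, hs2]
  have ha1pos : 0 < a1 := by linarith
  have ha1ne : a1 ≠ 0 := ne_of_gt ha1pos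
  have ha1sq : a1^2 = (b + s1*s2)/2 := by
    rw [h1]; field_simp; linear_combination hs1sq + hs2sq
  have ha1b : a1^2 ≤ b := by nlinarith [sq_nonneg (s1 - s2)]
  have ha2e : a2 = -a1⁻¹ := by rw [h2]; field_simp
  set w : ℕ → ℝ := fun j => (a1⁻¹^4)^j with hwdef
  set Qb : ℝ → ℝ := fun x => ((M:ℝ)/(s1*s2)) *
      ((b+1)*(a1^4 - a1⁻¹^4*x) - (a1^2 - a1⁻¹^2*x)) with hQbdef
  set Sb : ℝ → ℝ := fun x => (b-1)*(a1^3 + a1⁻¹^3*x) - (a1 + a1⁻¹*x) with hSbdef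
  set D : ℝ := ((M:ℝ)-2)/((b-2)*s2) with hDdef
  have hinv1 : a1⁻¹ < 1 := inv_lt_one_of_one_lt₀ ha1
  have hinvpos : 0 < a1⁻¹ := by positivity
  have hw01 : ∀ j : ℕ, 0 ≤ w j ∧ w j ≤ 1 := by
    intro j
    constructor
    · positivity
    · exact pow_le_one₀ (by positivity) (pow_le_one₀ hinvpos.le hinv1.le)
  have hQpos : ∀ x : ℝ, 0 ≤ x → x ≤ 1 → 0 < Qb x := by
    intro x hx hx1
    have hC : 0 < (M:ℝ)/(s1*s2) := by positivity
    simp only [hQbdef]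
    apply mul_pos hC
    have ha12 : 1 < a1^2 := by nlinarith
    have hv2 : a1⁻¹^2 < 1 := pow_lt_one₀ hinvpos.le hinv1 (by norm_num)
    have key0 : 0 < (b+1)*a1^4 - a1^2 := by nlinarith [pow_pos ha1pos 2, pow_pos ha1pos 4, sq_nonneg (a1^2)]
    have hd : 0 < a1^2 - a1⁻¹^2 := by nlinarith
    have hf : 0 < (b+1)*(a1^2+a1⁻¹^2) - 1 := by nlinarith [pow_pos hinvpos 2]
    have key1 : 0 < (b+1)*(a1^4 - a1⁻¹^4) - (a1^2 - a1⁻¹^2) := by nlinarith [mul_pos hd hf]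
    rcases le_or_gt 0 (a1⁻¹^2 - (b+1)*a1⁻¹^4) with hc | hc
    · nlinarith [mul_nonneg hx hc]
    · nlinarith [mul_nonneg (sub_nonneg.2 hx1) (neg_nonneg.2 hc.le)]
  have hXZ : ∀ j : ℕ, (a1^2)^j * (a1⁻¹^4)^j = (a1⁻¹^2)^j := by
    intro j
    rw [← mul_pow]
    congr 1
    field_simp
  have hq3 : ∀ j : ℕ, q (j+3) = (a1^2)^j * Qb (w j) := by
    intro j
    rw [hq (j+3), hsb]
    simp only [show 2*(j+3)-2 = 2*j+4 from by omega, show 2*(j+3)-4 = 2*j+2 from by omega]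
    rw [ha2e, Even.neg_pow ⟨j+2, by ring⟩, Even.neg_pow ⟨j+1, by ring⟩]
    simp only [hQbdef, hwdef]
    simp only [pow_add, pow_mul, pow_one]
    linear_combination ((M:ℝ)/(s1*s2)) * ((b+1)*a1⁻¹^4 - a1⁻¹^2) * hXZ j
  have hs3 : ∀ j : ℕ, (b-1) * (a1 ^ (2*(j+3)-3) - a2 ^ (2*(j+3)-3))
      - (a1 ^ (2*(j+3)-5) - a2 ^ (2*(j+3)-5)) = (a1^2)^j * Sb (w j) := by
    intro j
    simp only [show 2*(j+3)-3 = 2*j+3 from by omega, show 2*(j+3)-5 = 2*j+1 from by omega]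
    rw [ha2e, Odd.neg_pow ⟨j+1, by ring⟩, Odd.neg_pow ⟨j, by ring⟩]
    simp only [hSbdef, hwdef]
    simp only [pow_add, pow_mul, pow_one]
    linear_combination (a1⁻¹ - (b-1)*a1⁻¹^3) * hXZ j
  have hpt : ∀ j : ℕ, p (j+3) / q (j+3) = 1/(M:ℝ) + D * Sb (w j) / Qb (w j) := by
    intro j
    have hQ := hQpos (w j) (hw01 j).1 (hw01 j).2
    have hX : (0:ℝ) < (a1^2)^j := by positivity
    rw [hp (j+3), hq3 j, hs3 j]
    field_simp
  have hwlim : Filter.Tendsto w Filter.atTop (nhds 0) := by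
    apply tendsto_pow_atTop_nhds_zero_of_lt_one (by positivity)
    exact pow_lt_one₀ hinvpos.le hinv1 (by norm_num)
  have hQcont : Continuous Qb := by fun_prop
  have hScont : Continuous Sb := by fun_prop
  have hQlim : Filter.Tendsto (fun j => Qb (w j)) Filter.atTop (nhds (Qb 0)) :=
    (hQcont.tendsto 0).comp hwlim
  have hSlim : Filter.Tendsto (fun j => Sb (w j)) Filter.atTop (nhds (Sb 0)) :=
    (hScont.tendsto 0).comp hwlim
  have hQ0 : Qb 0 ≠ 0 := ne_of_gt (hQpos 0 le_rfl zero_le_one)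
  have hden : (0:ℝ) < (b+1)*a1^2 - 1 := by nlinarith
  have hA : ((b+1)*a1^4 - a1^2) ≠ 0 := by nlinarith [pow_pos ha1pos 2, pow_pos ha1pos 4]
  have hB : ((b+1)*a1^2 - 1) ≠ 0 := ne_of_gt hden
  have htarget : 1 / (M : ℝ) + (((M : ℝ) - 2) / ((M : ℝ) * s1 * a1)) *
      (((b - 1) * a1 ^ 2 - 1) / ((b + 1) * a1 ^ 2 - 1)) = 1/(M:ℝ) + D * Sb 0 / Qb 0 := by
    simp only [hQbdef, hSbdef, hDdef, mul_zero, add_zero, sub_zero]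
    rw [← hs1sq]
    field_simp
  rw [htarget, ← Filter.tendsto_add_atTop_iff_nat 3]
  apply Filter.Tendsto.congr (fun j => (hpt j).symm)
  exact Filter.Tendsto.const_add _ (((hSlim.const_mul D).div hQlim hQ0))
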